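/- Intersection criterion: In the recursive construction I_{m,r} with sufficiently small parameter ε at each level, the following are equivalent almost surely: (1) conv(A_{m,r}) ∩ conv(B_{m,r}) = ∅; (2) A^{(i)}_{m,r−1} ∩ B^{(i)}_{m,r−1} = ∅ (where i is the index defining Bob's copy); (3) A_{m,r} ∩ B_{m,r} = ∅. Moreover, when the sets are disjoint they are separated by a vector with strictly positive entries: there exists u ∈ R² with u > 0 entrywise, u·a < 1 for all a ∈ A_{m,r}, and u·b > 1 for all b ∈ B_{m,r}. -/

import Mathlib

open Real

noncomputable section

/-- m evenly spaced points on the positive quarter of the unit circle. -/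
def pcirc (m : ℕ) (j : Fin m) : Fin 2 → ℝ :=
  ![Real.cos ((((j : ℕ) : ℝ) + 1) * π / (2 * ((m : ℝ) + 1))),
    Real.sin ((((j : ℕ) : ℝ) + 1) * π / (2 * ((m : ℝ) + 1)))]

/-- The rotation U_j sending e₂ to p_j. -/
def Urot (m : ℕ) (j : Fin m) : Matrix (Fin 2) (Fin 2) ℝ :=
  !![Real.sin ((((j : ℕ) : ℝ) + 1) * π / (2 * ((m : ℝ) + 1))),
     Real.cos ((((j : ℕ) : ℝ) + 1) * π / (2 * ((m : ℝ) + 1)));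
     -Real.cos ((((j : ℕ) : ℝ) + 1) * π / (2 * ((m : ℝ) + 1))),
     Real.sin ((((j : ℕ) : ℝ) + 1) * π / (2 * ((m : ℝ) + 1)))]

/-- The affine map T_j(v) = U_j · diag(−ε, −ε²) · v + p_j. -/
def Tmap (m : ℕ) (ε : ℝ) (j : Fin m) (v : Fin 2 → ℝ) : Fin 2 → ℝ :=
  (Urot m j).mulVec ![-ε * v 0, -(ε ^ 2) * v 1] + pcirc m j

/-- The support of the recursive distribution I_{m,r} (indexed from 0). -/
def Isupp (m : ℕ) (ε : ℕ → ℝ) : ℕ → Set (Set (Fin 2 → ℝ) × Set (Fin 2 → ℝ))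
  | 0 => {AB | AB = ({fun _ => 0}, {fun _ => 0}) ∨ AB = ({fun _ => 0}, ∅)}
  | r + 1 =>
    {AB | ∃ (F : Fin m → Set (Fin 2 → ℝ) × Set (Fin 2 → ℝ)) (i : Fin m),
      (∀ j, F j ∈ Isupp m ε r) ∧
      AB.1 = ⋃ j, Tmap m (ε r) j '' (F j).2 ∧
      AB.2 = Tmap m (ε r) i '' (F i).1}

namespace IC

def x0 (m : ℕ) : ℝ := π / (2 * ((m : ℝ) + 1))
def sg (m : ℕ) : ℝ := Real.sin (x0 m)
def gm (m : ℕ) : ℝ := Real.cos (x0 m)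
def ee (m : ℕ) : ℝ := sg m * (1 - gm m) / 100
def th (m : ℕ) (j : Fin m) : ℝ := (((j : ℕ) : ℝ) + 1) * x0 m
lemma x0_pos (m : ℕ) : 0 < x0 m := by
  have h : (0:ℝ) < 2 * ((m : ℝ) + 1) := by positivity
  exact div_pos pi_pos h

lemma x0_le (m : ℕ) : x0 m ≤ π / 2 := by
  have h : (2:ℝ) ≤ 2 * ((m : ℝ) + 1) := by
    have : (0:ℝ) ≤ (m : ℝ) := Nat.cast_nonneg m
    nlinarith
  exact div_le_div_of_nonneg_left pi_pos.le (by norm_num) h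

lemma th_lb (m : ℕ) (j : Fin m) : x0 m ≤ th m j := by
  have h : (1:ℝ) ≤ ((j : ℕ) : ℝ) + 1 := by
    have : (0:ℝ) ≤ ((j : ℕ) : ℝ) := Nat.cast_nonneg _
    linarith
  have := x0_pos m
  unfold th; nlinarith

lemma th_ub (m : ℕ) (j : Fin m) : th m j ≤ π / 2 - x0 m := by
  have h1 : ((j : ℕ) : ℝ) + 1 ≤ (m : ℝ) := by
    have := j.isLt
    exact_mod_cast Nat.succ_le_of_lt this
  have h2 : (m : ℝ) * x0 m + x0 m = π / 2 := by
    unfold x0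
    have : ((m : ℝ) + 1) ≠ 0 := by positivity
    field_simp
  have := x0_pos m
  unfold th; nlinarith

lemma th_nonneg (m : ℕ) (j : Fin m) : 0 ≤ th m j :=
  le_trans (x0_pos m).le (th_lb m j)

lemma th_le (m : ℕ) (j : Fin m) : th m j ≤ π / 2 := by
  have := th_ub m j; have := x0_pos m; linarith

lemma sg_pos (m : ℕ) : 0 < sg m :=
  sin_pos_of_pos_of_lt_pi (x0_pos m) (lt_of_le_of_lt (x0_le m) (by linarith [pi_pos]))

lemma sg_le_one (m : ℕ) : sg m ≤ 1 := sin_le_one _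

lemma gm_nonneg (m : ℕ) : 0 ≤ gm m :=
  cos_nonneg_of_mem_Icc ⟨by linarith [x0_pos m, pi_pos], x0_le m⟩

lemma gm_le_one (m : ℕ) : gm m ≤ 1 := cos_le_one _

lemma gm_lt_one (m : ℕ) : gm m < 1 := by
  have h := cos_lt_cos_of_nonneg_of_le_pi (le_refl 0) (le_trans (x0_le m) (by linarith [pi_pos])) (x0_pos m)
  rw [cos_zero] at h; exact h

lemma pyth (m : ℕ) : sg m ^ 2 + gm m ^ 2 = 1 := sin_sq_add_cos_sq _

lemma one_sub_gm_le (m : ℕ) : 1 - gm m ≤ sg m ^ 2 := by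
  nlinarith [pyth m, gm_nonneg m, gm_le_one m]

lemma ee_pos (m : ℕ) : 0 < ee m := by
  have h := mul_pos (sg_pos m) (by linarith [gm_lt_one m] : (0:ℝ) < 1 - gm m)
  unfold ee; linarith

lemma ee_le (m : ℕ) : ee m ≤ (1 - gm m) / 100 := by
  have := sg_pos m; have := sg_le_one m; have := gm_lt_one m
  unfold ee; nlinarith

lemma ee_le' (m : ℕ) : ee m ≤ 1 / 100 := by
  have := ee_le m; have := gm_nonneg m; linarith

lemma sin_th_ge (m : ℕ) (j : Fin m) : sg m ≤ Real.sin (th m j) :=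
  sin_le_sin_of_le_of_le_pi_div_two (by linarith [x0_pos m, pi_pos]) (th_le m j) (th_lb m j)

lemma sin_th_le (m : ℕ) (j : Fin m) : Real.sin (th m j) ≤ 1 := sin_le_one _

lemma cos_th_ge (m : ℕ) (j : Fin m) : sg m ≤ Real.cos (th m j) := by
  have h := cos_le_cos_of_nonneg_of_le_pi (th_nonneg m j)
    (by linarith [x0_pos m, pi_pos] : π / 2 - x0 m ≤ π) (th_ub m j)
  rwa [cos_pi_div_two_sub] at h

lemma cos_th_le (m : ℕ) (j : Fin m) : Real.cos (th m j) ≤ 1 := cos_le_one _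

lemma pyth_th (m : ℕ) (j : Fin m) :
    Real.sin (th m j) ^ 2 + Real.cos (th m j) ^ 2 = 1 := sin_sq_add_cos_sq _

lemma cross (m : ℕ) (i j : Fin m) (hij : i ≠ j) :
    Real.cos (th m i) * Real.cos (th m j) + Real.sin (th m i) * Real.sin (th m j) ≤ gm m := by
  have h : Real.cos (th m i) * Real.cos (th m j) + Real.sin (th m i) * Real.sin (th m j)
      = Real.cos (th m i - th m j) := (Real.cos_sub _ _).symm
  rw [h, ← Real.cos_abs]
  have habs : |th m i - th m j| = |((i : ℕ) : ℝ) - ((j : ℕ) : ℝ)| * x0 m := by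
    unfold th
    rw [show (((i:ℕ):ℝ) + 1) * x0 m - (((j:ℕ):ℝ) + 1) * x0 m
        = (((i:ℕ):ℝ) - ((j:ℕ):ℝ)) * x0 m by ring,
      abs_mul, abs_of_pos (x0_pos m)]
  have h1 : (1:ℝ) ≤ |((i : ℕ) : ℝ) - ((j : ℕ) : ℝ)| := by
    have hne : ((i:ℕ) : ℤ) ≠ ((j:ℕ) : ℤ) := by
      intro h'; apply hij; exact Fin.ext (by exact_mod_cast h')
    have h2 := Int.one_le_abs (sub_ne_zero.2 hne)
    have h3 : ((|((i:ℕ):ℤ) - ((j:ℕ):ℤ)| : ℤ) : ℝ) = |((i:ℕ):ℝ) - ((j:ℕ):ℝ)| := by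
      push_cast; rfl
    rw [← h3]; exact_mod_cast h2
  have h2 : |((i : ℕ) : ℝ) - ((j : ℕ) : ℝ)| ≤ (m : ℝ) := by
    have hi : ((i:ℕ) : ℝ) < (m:ℝ) := by exact_mod_cast i.isLt
    have hj : ((j:ℕ) : ℝ) < (m:ℝ) := by exact_mod_cast j.isLt
    have hi0 : (0:ℝ) ≤ ((i:ℕ):ℝ) := Nat.cast_nonneg _
    have hj0 : (0:ℝ) ≤ ((j:ℕ):ℝ) := Nat.cast_nonneg _
    rw [abs_le]; constructor <;> linarith
  have h3 : |((i : ℕ) : ℝ) - ((j : ℕ) : ℝ)| * x0 m ≤ π := by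
    have hx := x0_pos m
    have h4 : (m : ℝ) * x0 m + x0 m = π / 2 := by
      unfold x0
      have : ((m : ℝ) + 1) ≠ 0 := by positivity
      field_simp
    nlinarith [pi_pos, abs_nonneg (((i:ℕ):ℝ) - ((j:ℕ):ℝ))]
  rw [habs]
  apply cos_le_cos_of_nonneg_of_le_pi (x0_pos m).le h3
  nlinarith [x0_pos m]

lemma Tmap_zero (m : ℕ) (e : ℝ) (j : Fin m) (v : Fin 2 → ℝ) :
    Tmap m e j v 0 = Real.cos (th m j) - e * Real.sin (th m j) * v 0
      - e ^ 2 * Real.cos (th m j) * v 1 := by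
  simp [Tmap, Urot, pcirc, th, x0, Matrix.mulVec, dotProduct, Fin.sum_univ_two]
  ring_nf

lemma Tmap_one (m : ℕ) (e : ℝ) (j : Fin m) (v : Fin 2 → ℝ) :
    Tmap m e j v 1 = Real.sin (th m j) + e * Real.cos (th m j) * v 0
      - e ^ 2 * Real.sin (th m j) * v 1 := by
  simp [Tmap, Urot, pcirc, th, x0, Matrix.mulVec, dotProduct, Fin.sum_univ_two]
  ring_nf

lemma prodb {P c v : ℝ} (hP : |P| ≤ c) (hv : |v| ≤ 2) : |P * v| ≤ 2 * c := by
  rw [abs_mul]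
  calc |P| * |v| ≤ c * 2 := mul_le_mul hP hv (abs_nonneg _) (le_trans (abs_nonneg _) hP)
  _ = 2 * c := by ring

lemma Tmap_bound (m : ℕ) (e : ℝ) (he0 : 0 < e) (he1 : e ≤ 1/100) (j : Fin m)
    (v : Fin 2 → ℝ) (h0 : |v 0| ≤ 2) (h1 : |v 1| ≤ 2) :
    |Tmap m e j v 0| ≤ 2 ∧ |Tmap m e j v 1| ≤ 2 := by
  have he2 : e^2 ≤ e := by nlinarith
  have hes : |e * Real.sin (th m j)| ≤ e := by
    rw [abs_mul, abs_of_pos he0]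
    nlinarith [Real.abs_sin_le_one (th m j), abs_nonneg (Real.sin (th m j))]
  have hec : |e * Real.cos (th m j)| ≤ e := by
    rw [abs_mul, abs_of_pos he0]
    nlinarith [Real.abs_cos_le_one (th m j), abs_nonneg (Real.cos (th m j))]
  have hes2 : |e ^ 2 * Real.sin (th m j)| ≤ e := by
    rw [abs_mul, abs_of_pos (by positivity : (0:ℝ) < e^2)]
    nlinarith [Real.abs_sin_le_one (th m j), abs_nonneg (Real.sin (th m j))]
  have hec2 : |e ^ 2 * Real.cos (th m j)| ≤ e := by
    rw [abs_mul, abs_of_pos (by positivity : (0:ℝ) < e^2)]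
    nlinarith [Real.abs_cos_le_one (th m j), abs_nonneg (Real.cos (th m j))]
  have b1 := abs_le.1 (prodb hes h0)
  have b2 := abs_le.1 (prodb hec2 h1)
  have b3 := abs_le.1 (prodb hec h0)
  have b4 := abs_le.1 (prodb hes2 h1)
  have hs := Real.neg_one_le_sin (th m j)
  have hs' := Real.sin_le_one (th m j)
  have hc := Real.neg_one_le_cos (th m j)
  have hc' := Real.cos_le_one (th m j)
  rw [Tmap_zero, Tmap_one]
  constructor <;> rw [abs_le] <;> constructor <;> nlinarith

lemma dotT (m : ℕ) (e : ℝ) (j : Fin m) (n0 n1 : ℝ) (v : Fin 2 → ℝ) :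
    n0 * Tmap m e j v 0 + n1 * Tmap m e j v 1 =
      (n0 * Real.cos (th m j) + n1 * Real.sin (th m j))
      + e * v 0 * (n1 * Real.cos (th m j) - n0 * Real.sin (th m j))
      - e ^ 2 * v 1 * (n0 * Real.cos (th m j) + n1 * Real.sin (th m j)) := by
  rw [Tmap_zero, Tmap_one]; ring

lemma ee_calc1 (m : ℕ) : 3 * ee m / (sg m / 2) = 6 * (1 - gm m) / 100 := by
  unfold ee
  have h := (sg_pos m).ne'
  field_simp
  ring

lemma ee_calc2 (m : ℕ) : ee m ^ 2 / (sg m / 2) = 2 * ee m * (1 - gm m) / 100 := by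
  rw [show ee m ^ 2 = ee m * ee m by ring]
  nth_rewrite 2 [ee]
  have h := (sg_pos m).ne'
  field_simp

lemma construct (m : ℕ) (i : Fin m) (w : Fin 2 → ℝ)
    (hw0l : sg m / 2 ≤ w 0) (hw0u : w 0 ≤ 3) (hw1l : sg m / 2 ≤ w 1) (hw1u : w 1 ≤ 3)
    (G : Fin m → Set (Fin 2 → ℝ)) (Ai : Set (Fin 2 → ℝ))
    (hbnd : ∀ j, ∀ v ∈ G j, |v 0| ≤ 2 ∧ |v 1| ≤ 2)
    (hA : ∀ a ∈ Ai, w 0 * a 0 + w 1 * a 1 < 1)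
    (hB : ∀ b ∈ G i, 1 < w 0 * b 0 + w 1 * b 1) :
    ∃ u : Fin 2 → ℝ, sg m / 2 ≤ u 0 ∧ u 0 ≤ 3 ∧ sg m / 2 ≤ u 1 ∧ u 1 ≤ 3 ∧
      (∀ a ∈ ⋃ j, Tmap m (ee m) j '' G j, u 0 * a 0 + u 1 * a 1 < 1) ∧
      (∀ b ∈ Tmap m (ee m) i '' Ai, 1 < u 0 * b 0 + u 1 * b 1) := by
  have hσ0 := sg_pos m
  have hσ1 := sg_le_one m
  have hγ0 := gm_nonneg m
  have hγ1 := gm_lt_one m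
  have h1g := one_sub_gm_le m
  have he0 := ee_pos m
  have he1 := ee_le' m
  have heg := ee_le m
  have he2 : ee m ^ 2 ≤ ee m := by
    have q := mul_le_mul_of_nonneg_left he1 he0.le
    have q2 : ee m ^ 2 = ee m * ee m := sq (ee m)
    linarith
  have hw1 : 0 < w 1 := lt_of_lt_of_le (by positivity) hw1l
  have hw0 : 0 < w 0 := lt_of_lt_of_le (by positivity) hw0l
  obtain ⟨s, hsdef⟩ : ∃ x : ℝ, x = ee m * w 0 / w 1 := ⟨_, rfl⟩
  obtain ⟨t, htdef⟩ : ∃ x : ℝ, x = ee m ^ 2 / w 1 := ⟨_, rfl⟩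
  have hs0 : 0 < s := by rw [hsdef]; positivity
  have ht0 : 0 < t := by rw [htdef]; positivity
  have hes : ee m * s = t * w 0 := by rw [hsdef, htdef]; field_simp
  have het : ee m ^ 2 = t * w 1 := by rw [htdef]; field_simp
  have hsb : s ≤ 6 * (1 - gm m) / 100 := by
    have h1 : s ≤ 3 * ee m / (sg m / 2) := by
      rw [hsdef]
      refine div_le_div₀ (by positivity) ?_ (by positivity) hw1l
      linarith [mul_le_mul_of_nonneg_left hw0u he0.le]
    rw [ee_calc1] at h1; exact h1
  have htb : t ≤ (1 - gm m) / 100 := by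
    have h1 : t ≤ ee m ^ 2 / (sg m / 2) := by
      rw [htdef]
      exact div_le_div_of_nonneg_left (by positivity) (by positivity) hw1l
    rw [ee_calc2] at h1
    have h2 : (0:ℝ) ≤ (1 - 2 * ee m) * (1 - gm m) :=
      mul_nonneg (by linarith) (by linarith)
    linarith
  have hsσ : s ≤ 6 * sg m / 100 := by
    have q : sg m * sg m ≤ sg m * 1 := mul_le_mul_of_nonneg_left hσ1 hσ0.le
    have q2 : sg m ^ 2 = sg m * sg m := sq (sg m)
    linarith
  have hs6 : s ≤ 6 / 100 := by linarith
  have ht1 : t ≤ 1 / 100 := by linarith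
  have hct : 0 < 1 - t := by linarith
  have hsθ : sg m ≤ Real.sin (th m i) := sin_th_ge m i
  have hsθ1 : Real.sin (th m i) ≤ 1 := sin_le_one _
  have hcθ : sg m ≤ Real.cos (th m i) := cos_th_ge m i
  have hcθ1 : Real.cos (th m i) ≤ 1 := cos_le_one _
  have hpy : Real.sin (th m i) ^ 2 + Real.cos (th m i) ^ 2 = 1 := Real.sin_sq_add_cos_sq _
  obtain ⟨n0, hn0def⟩ : ∃ x : ℝ, x = Real.cos (th m i) + s * Real.sin (th m i) := ⟨_, rfl⟩
  obtain ⟨n1, hn1def⟩ : ∃ x : ℝ, x = Real.sin (th m i) - s * Real.cos (th m i) := ⟨_, rfl⟩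
  have key : ∀ v : Fin 2 → ℝ,
      n0 * Tmap m (ee m) i v 0 + n1 * Tmap m (ee m) i v 1
        = 1 - t * (w 0 * v 0 + w 1 * v 1) := by
    intro v
    rw [dotT m (ee m) i n0 n1 v, hn0def, hn1def]
    linear_combination (1 - ee m * s * v 0 - ee m ^ 2 * v 1) * hpy - v 0 * hes - v 1 * het
  refine ⟨![n0 / (1 - t), n1 / (1 - t)], ?_, ?_, ?_, ?_, ?_, ?_⟩
  · simp only [Matrix.cons_val_zero]
    rw [le_div_iff₀ hct, hn0def]
    linarith [mul_nonneg hσ0.le ht0.le, mul_nonneg hs0.le (le_trans hσ0.le hsθ), hcθ]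
  · simp only [Matrix.cons_val_zero]
    rw [div_le_iff₀ hct, hn0def]
    linarith [mul_le_mul_of_nonneg_left hsθ1 hs0.le, hcθ1, hs6, ht1]
  · simp only [Matrix.cons_val_one, Matrix.head_cons, Matrix.cons_val_zero]
    rw [le_div_iff₀ hct, hn1def]
    linarith [mul_nonneg hσ0.le ht0.le, mul_le_mul_of_nonneg_left hcθ1 hs0.le, hsσ, hsθ]
  · simp only [Matrix.cons_val_one, Matrix.head_cons, Matrix.cons_val_zero]
    rw [div_le_iff₀ hct, hn1def]
    linarith [mul_nonneg hs0.le (le_trans hσ0.le hcθ), hsθ1, ht1]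
  · -- union side
    intro a ha
    simp only [Set.mem_iUnion, Set.mem_image] at ha
    obtain ⟨j, v, hv, rfl⟩ := ha
    simp only [Matrix.cons_val_zero, Matrix.cons_val_one, Matrix.head_cons]
    have hcomb : n0 / (1 - t) * Tmap m (ee m) j v 0 + n1 / (1 - t) * Tmap m (ee m) j v 1
        = (n0 * Tmap m (ee m) j v 0 + n1 * Tmap m (ee m) j v 1) / (1 - t) := by ring
    rw [hcomb, div_lt_one hct]
    by_cases hji : j = i
    · subst hji
      rw [key v]
      have hbv := hB v hv
      linarith [mul_lt_mul_of_pos_left hbv ht0]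
    · -- geometric estimate for other clusters
      have hsφ : sg m ≤ Real.sin (th m j) := sin_th_ge m j
      have hsφ1 : Real.sin (th m j) ≤ 1 := sin_le_one _
      have hcφ : sg m ≤ Real.cos (th m j) := cos_th_ge m j
      have hcφ1 : Real.cos (th m j) ≤ 1 := cos_le_one _
      have hv0 := abs_le.1 (hbnd j v hv).1
      have hv1 := abs_le.1 (hbnd j v hv).2
      rw [dotT m (ee m) j n0 n1 v]
      obtain ⟨C, hCdef⟩ : ∃ x : ℝ,
        x = Real.cos (th m i) * Real.cos (th m j) + Real.sin (th m i) * Real.sin (th m j) :=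
        ⟨_, rfl⟩
      obtain ⟨D, hDdef⟩ : ∃ x : ℝ,
        x = Real.sin (th m i) * Real.cos (th m j) - Real.cos (th m i) * Real.sin (th m j) :=
        ⟨_, rfl⟩
      have hCub : C ≤ gm m := by rw [hCdef]; exact cross m i j (fun h => hji h.symm)
      have hClb : -1 ≤ C := by
        rw [hCdef, ← Real.cos_sub]; exact Real.neg_one_le_cos _
      have hDub : D ≤ 1 := by
        rw [hDdef, ← Real.sin_sub]; exact Real.sin_le_one _
      have hDlb : -1 ≤ D := by
        rw [hDdef, ← Real.sin_sub]; exact Real.neg_one_le_sin _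
      have hM : n0 * Real.cos (th m j) + n1 * Real.sin (th m j) = C + s * D := by
        rw [hn0def, hn1def, hCdef, hDdef]; ring
      have hK : n1 * Real.cos (th m j) - n0 * Real.sin (th m j) = D - s * C := by
        rw [hn0def, hn1def, hCdef, hDdef]; ring
      rw [hM, hK]
      have hsD1 : s * D ≤ s := by linarith [mul_le_mul_of_nonneg_left hDub hs0.le]
      have hsD2 : -s ≤ s * D := by linarith [mul_le_mul_of_nonneg_left hDlb hs0.le]
      have hsC1 : s * C ≤ s := by
        have q1 := mul_le_mul_of_nonneg_left hCub hs0.le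
        have q2 := mul_le_mul_of_nonneg_left (le_of_lt hγ1) hs0.le
        linarith
      have hsC2 : -s ≤ s * C := by linarith [mul_le_mul_of_nonneg_left hClb hs0.le]
      have hvK : v 0 * (D - s * C) ≤ 4 := by
        have q1 : (0:ℝ) ≤ (2 - v 0) * ((D - s * C) + 2) :=
          mul_nonneg (by linarith) (by linarith)
        have q2 : (0:ℝ) ≤ (v 0 + 2) * (2 - (D - s * C)) :=
          mul_nonneg (by linarith) (by linarith)
        linarith [q1, q2]
      have hvM : -4 ≤ v 1 * (C + s * D) := by
        have q1 : (0:ℝ) ≤ (2 - v 1) * (2 - (C + s * D)) :=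
          mul_nonneg (by linarith) (by linarith)
        have q2 : (0:ℝ) ≤ (v 1 + 2) * ((C + s * D) + 2) :=
          mul_nonneg (by linarith) (by linarith)
        linarith [q1, q2]
      have h2 : ee m * (v 0 * (D - s * C)) ≤ ee m * 4 :=
        mul_le_mul_of_nonneg_left hvK he0.le
      have h3 : ee m ^ 2 * (-4) ≤ ee m ^ 2 * (v 1 * (C + s * D)) :=
        mul_le_mul_of_nonneg_left hvM (by positivity)
      have hMub : C + s * D ≤ gm m + s := by linarith
      linarith [h2, h3, hMub, hsb, htb, heg, he2, he0, hγ1]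
  · -- B side
    intro b hb
    simp only [Set.mem_image] at hb
    obtain ⟨v, hv, rfl⟩ := hb
    simp only [Matrix.cons_val_zero, Matrix.cons_val_one, Matrix.head_cons]
    have hcomb : n0 / (1 - t) * Tmap m (ee m) i v 0 + n1 / (1 - t) * Tmap m (ee m) i v 1
        = (n0 * Tmap m (ee m) i v 0 + n1 * Tmap m (ee m) i v 1) / (1 - t) := by ring
    rw [hcomb, key v, lt_div_iff₀ hct]
    have hav := hA v hv
    linarith [mul_lt_mul_of_pos_left hav ht0]
lemma Isupp_bound (m : ℕ) : ∀ r : ℕ, ∀ AB ∈ Isupp m (fun _ => ee m) r,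
    ∀ v, (v ∈ AB.1 ∨ v ∈ AB.2) → |v 0| ≤ 2 ∧ |v 1| ≤ 2 := by
  intro r
  induction r with
  | zero =>
    intro AB hAB v hv
    simp only [Isupp, Set.mem_setOf_eq] at hAB
    rcases hAB with h | h <;> subst h <;>
      rcases hv with hv | hv <;> simp_all <;> subst hv <;> norm_num
  | succ r ih =>
    intro AB hAB v hv
    simp only [Isupp, Set.mem_setOf_eq] at hAB
    obtain ⟨F, i, hF, h1, h2⟩ := hAB
    rcases hv with hv | hv
    · rw [h1] at hv
      simp only [Set.mem_iUnion, Set.mem_image] at hv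
      obtain ⟨j, x, hx, rfl⟩ := hv
      have hb := ih (F j) (hF j) x (Or.inr hx)
      exact Tmap_bound m (ee m) (ee_pos m) (ee_le' m) j x hb.1 hb.2
    · rw [h2] at hv
      simp only [Set.mem_image] at hv
      obtain ⟨x, hx, rfl⟩ := hv
      have hb := ih (F i) (hF i) x (Or.inl hx)
      exact Tmap_bound m (ee m) (ee_pos m) (ee_le' m) i x hb.1 hb.2

lemma Isupp_sep (m : ℕ) : ∀ r : ℕ, ∀ AB ∈ Isupp m (fun _ => ee m) r,
    AB.1 ∩ AB.2 = ∅ →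
    ∃ u : Fin 2 → ℝ, sg m / 2 ≤ u 0 ∧ u 0 ≤ 3 ∧ sg m / 2 ≤ u 1 ∧ u 1 ≤ 3 ∧
      (∀ a ∈ AB.1, u 0 * a 0 + u 1 * a 1 < 1) ∧
      (∀ b ∈ AB.2, 1 < u 0 * b 0 + u 1 * b 1) := by
  intro r
  induction r with
  | zero =>
    intro AB hAB hdis
    simp only [Isupp, Set.mem_setOf_eq] at hAB
    rcases hAB with h | h <;> subst h
    · exfalso
      rw [Set.eq_empty_iff_forall_notMem] at hdis
      exact hdis (fun _ => 0) ⟨rfl, rfl⟩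
    · refine ⟨![1, 1], ?_, ?_, ?_, ?_, ?_, ?_⟩ <;>
        simp only [Matrix.cons_val_zero, Matrix.cons_val_one, Matrix.head_cons]
      · linarith [sg_le_one m]
      · norm_num
      · linarith [sg_le_one m]
      · norm_num
      · intro a ha
        simp only [Set.mem_singleton_iff] at ha
        subst ha; norm_num
      · intro b hb
        exact absurd hb (Set.notMem_empty b)
  | succ r ih =>
    intro AB hAB hdis
    simp only [Isupp, Set.mem_setOf_eq] at hAB
    obtain ⟨F, i, hF, h1, h2⟩ := hAB
    have hdis' : (F i).1 ∩ (F i).2 = ∅ := by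
      rw [Set.eq_empty_iff_forall_notMem] at hdis ⊢
      rintro x ⟨hx1, hx2⟩
      apply hdis (Tmap m (ee m) i x)
      constructor
      · rw [h1]
        exact Set.mem_iUnion.2 ⟨i, Set.mem_image_of_mem _ hx2⟩
      · rw [h2]
        exact Set.mem_image_of_mem _ hx1
    obtain ⟨w, hw1, hw2, hw3, hw4, hw5, hw6⟩ := ih (F i) (hF i) hdis'
    have hbnd : ∀ j, ∀ v ∈ (F j).2, |v 0| ≤ 2 ∧ |v 1| ≤ 2 :=
      fun j v hv => Isupp_bound m r (F j) (hF j) v (Or.inr hv)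
    obtain ⟨u, hu⟩ := construct m i w hw1 hw2 hw3 hw4 (fun j => (F j).2) (F i).1
      hbnd hw5 hw6
    rw [h1, h2]
    exact ⟨u, hu⟩
lemma halfspace_sep (m : ℕ) (A B : Set (Fin 2 → ℝ)) (u : Fin 2 → ℝ)
    (hA : ∀ a ∈ A, u 0 * a 0 + u 1 * a 1 < 1)
    (hB : ∀ b ∈ B, 1 < u 0 * b 0 + u 1 * b 1) :
    convexHull ℝ A ∩ convexHull ℝ B = ∅ := by
  have hlin : IsLinearMap ℝ (fun y : Fin 2 → ℝ => u 0 * y 0 + u 1 * y 1) := by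
    constructor
    · intro x y; simp only [Pi.add_apply]; ring
    · intro c x; simp only [Pi.smul_apply, smul_eq_mul]; ring
  rw [Set.eq_empty_iff_forall_notMem]
  rintro x ⟨hx1, hx2⟩
  have h1 : convexHull ℝ A ⊆ {y : Fin 2 → ℝ | u 0 * y 0 + u 1 * y 1 < 1} :=
    convexHull_min hA (convex_halfSpace_lt hlin 1)
  have h2 : convexHull ℝ B ⊆ {y : Fin 2 → ℝ | 1 < u 0 * y 0 + u 1 * y 1} :=
    convexHull_min hB (convex_halfSpace_gt hlin 1)
  have := h1 hx1
  have := h2 hx2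
  simp only [Set.mem_setOf_eq] at *
  linarith

end IC

/-- Intersection criterion: with sufficiently small parameters ε at each
level, for A = ⋃_j T_j(B^{(j)}) and B = T_i(A^{(i)}) built from support
elements of level r: (1) conv(A) ∩ conv(B) = ∅ iff (2) A^{(i)} ∩ B^{(i)} = ∅
iff (3) A ∩ B = ∅; moreover disjoint sets are separated by a vector with
strictly positive entries. -/
theorem intersection_criterion (m : ℕ) (hm : 1 ≤ m) :
    ∃ ε : ℕ → ℝ, (∀ l, 0 < ε l) ∧
      ∀ (r : ℕ) (F : Fin m → Set (Fin 2 → ℝ) × Set (Fin 2 → ℝ)),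
        (∀ j, F j ∈ Isupp m ε r) → ∀ i : Fin m,
        ((convexHull ℝ (⋃ j, Tmap m (ε r) j '' (F j).2) ∩
            convexHull ℝ (Tmap m (ε r) i '' (F i).1) = ∅) ↔
          ((F i).1 ∩ (F i).2 = ∅)) ∧
        ((convexHull ℝ (⋃ j, Tmap m (ε r) j '' (F j).2) ∩
            convexHull ℝ (Tmap m (ε r) i '' (F i).1) = ∅) ↔
          ((⋃ j, Tmap m (ε r) j '' (F j).2) ∩
            (Tmap m (ε r) i '' (F i).1) = ∅)) ∧
        ((⋃ j, Tmap m (ε r) j '' (F j).2) ∩ (Tmap m (ε r) i '' (F i).1) = ∅ →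
          ∃ u : Fin 2 → ℝ, 0 < u 0 ∧ 0 < u 1 ∧
            (∀ a ∈ ⋃ j, Tmap m (ε r) j '' (F j).2, (∑ l, u l * a l) < 1) ∧
            (∀ b ∈ Tmap m (ε r) i '' (F i).1, 1 < (∑ l, u l * b l))) := by
  refine ⟨fun _ => IC.ee m, fun _ => IC.ee_pos m, ?_⟩
  intro r F hF i
  set A : Set (Fin 2 → ℝ) := ⋃ j, Tmap m (IC.ee m) j '' (F j).2 with hAdef
  set B : Set (Fin 2 → ℝ) := Tmap m (IC.ee m) i '' (F i).1 with hBdef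
  -- construction of a separating vector from condition (2)
  have hbnd : ∀ j, ∀ v ∈ (F j).2, |v 0| ≤ 2 ∧ |v 1| ≤ 2 :=
    fun j v hv => IC.Isupp_bound m r (F j) (hF j) v (Or.inr hv)
  have hcons : (F i).1 ∩ (F i).2 = ∅ →
      ∃ u : Fin 2 → ℝ, IC.sg m / 2 ≤ u 0 ∧ u 0 ≤ 3 ∧ IC.sg m / 2 ≤ u 1 ∧ u 1 ≤ 3 ∧
        (∀ a ∈ A, u 0 * a 0 + u 1 * a 1 < 1) ∧
        (∀ b ∈ B, 1 < u 0 * b 0 + u 1 * b 1) := by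
    intro hdis
    obtain ⟨w, hw1, hw2, hw3, hw4, hw5, hw6⟩ := IC.Isupp_sep m r (F i) (hF i) hdis
    exact IC.construct m i w hw1 hw2 hw3 hw4 (fun j => (F j).2) (F i).1 hbnd hw5 hw6
  -- separation implies convex hulls are disjoint
  have hhull : (F i).1 ∩ (F i).2 = ∅ → convexHull ℝ A ∩ convexHull ℝ B = ∅ := by
    intro hdis
    obtain ⟨u, _, _, _, _, hu5, hu6⟩ := hcons hdis
    exact IC.halfspace_sep m A B u hu5 hu6
  -- hull disjointness implies set disjointness
  have hsets : convexHull ℝ A ∩ convexHull ℝ B = ∅ → A ∩ B = ∅ := by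
    intro h
    have hsub : A ∩ B ⊆ convexHull ℝ A ∩ convexHull ℝ B :=
      Set.inter_subset_inter (subset_convexHull ℝ A) (subset_convexHull ℝ B)
    rw [h] at hsub
    exact Set.subset_empty_iff.1 hsub
  -- set disjointness implies condition (2)
  have h32 : A ∩ B = ∅ → (F i).1 ∩ (F i).2 = ∅ := by
    intro h
    rw [Set.eq_empty_iff_forall_notMem] at h ⊢
    rintro x ⟨hx1, hx2⟩
    apply h (Tmap m (IC.ee m) i x)
    constructor
    · exact Set.mem_iUnion.2 ⟨i, Set.mem_image_of_mem _ hx2⟩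
    · exact Set.mem_image_of_mem _ hx1
  refine ⟨⟨fun h => h32 (hsets h), hhull⟩, ⟨hsets, fun h => hhull (h32 h)⟩, ?_⟩
  intro h
  obtain ⟨u, hu1, hu2, hu3, hu4, hu5, hu6⟩ := hcons (h32 h)
  have hσ := IC.sg_pos m
  refine ⟨u, by linarith, by linarith, ?_, ?_⟩
  · intro a ha
    rw [Fin.sum_univ_two]
    exact hu5 a ha
  · intro b hb
    rw [Fin.sum_univ_two]
    exact hu6 b hb
end
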